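/- Let C > 0, λ ∈ ℝ, α ∈ (0,1), p ∈ (0,1), q ∈ (0,1]. Define the finite-horizon discounted value functions V_t : ℕ → ℝ by V_0(x) = C·x and V_{t+1}(x) = C·x + min( α·∑_{d=0}^{x} π_x(d)·( p·V_t(x+1-d) + (1-p)·V_t(x-d) ), λ + α·∑_{d=0}^{x} π_x(d)·V_t(x-d) ), where π_x(d) = (x choose d)(q/x)^d(1-q/x)^{x-d} for x ≥ 1 and π_0(0) = 1. Then for every t, V_t is nondecreasing on ℕ. -/

import Mathlib

open Finset

private def Gq (f : ℕ → ℝ) (n : ℕ) (r : ℝ) : ℝ :=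
  ∑ d ∈ Finset.range (n+1), (n.choose d : ℝ) * r^d * (1-r)^(n-d) * f (n - d)

private lemma Gq_zero (f : ℕ → ℝ) (r : ℝ) : Gq f 0 r = f 0 := by
  simp [Gq]

private lemma Gq_rec (f : ℕ → ℝ) (n : ℕ) (r : ℝ) :
    Gq f (n+1) r = (1-r) * Gq (fun k => f (k+1)) n r + r * Gq f n r := by
  unfold Gq
  rw [Finset.mul_sum, Finset.mul_sum,
      Finset.sum_range_succ' (fun d => ((n+1).choose d : ℝ) * r^d * (1-r)^(n+1-d) * f (n+1-d)) (n+1),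
      Finset.sum_range_succ' (fun d => (1-r) * ((n.choose d : ℝ) * r^d * (1-r)^(n-d) * ((fun k => f (k+1)) (n-d)))) n]
  have e1 : ∀ k ∈ Finset.range (n+1),
      (((n + 1).choose (k + 1) : ℝ)) * r ^ (k + 1) * (1 - r) ^ (n + 1 - (k + 1)) * f (n + 1 - (k + 1))
      = (n.choose k : ℝ) * r ^ (k+1) * (1-r)^(n-k) * f (n-k)
        + (n.choose (k+1) : ℝ) * r ^ (k+1) * (1-r)^(n-k) * f (n-k) := by
    intro k hk
    rw [Nat.succ_sub_succ, Nat.choose_succ_succ]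
    push_cast; ring
  rw [Finset.sum_congr rfl e1, Finset.sum_add_distrib]
  have e2 : ∑ k ∈ Finset.range (n+1), (n.choose (k+1) : ℝ) * r ^ (k+1) * (1-r)^(n-k) * f (n-k)
      = ∑ k ∈ Finset.range n, (n.choose (k+1) : ℝ) * r ^ (k+1) * (1-r)^(n-k) * f (n-k) := by
    rw [Finset.sum_range_succ]; simp
  rw [e2]
  have e3 : ∑ k ∈ Finset.range n, (n.choose (k+1) : ℝ) * r ^ (k+1) * (1-r)^(n-k) * f (n-k)
      = ∑ k ∈ Finset.range n,
          (1 - r) * ((n.choose (k + 1) : ℝ) * r ^ (k + 1) * (1 - r) ^ (n - (k + 1)) *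
            ((fun k => f (k + 1)) (n - (k + 1)))) := by
    apply Finset.sum_congr rfl
    intro k hk
    have hk' : k < n := Finset.mem_range.mp hk
    have h4 : n - (k+1) + 1 = n - k := by omega
    have h5 : (1-r)^(n-k) = (1-r)^(n-(k+1)) * (1-r) := by
      rw [← pow_succ]; congr 1; omega
    simp only []
    rw [h4, h5]; ring
  rw [e3]
  have e4 : ∑ k ∈ Finset.range (n+1), (n.choose k : ℝ) * r ^ (k+1) * (1-r)^(n-k) * f (n-k)
      = ∑ i ∈ Finset.range (n + 1), r * ((n.choose i : ℝ) * r ^ i * (1 - r) ^ (n - i) * f (n - i)) := by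
    apply Finset.sum_congr rfl; intro k hk; ring
  rw [e4]
  simp only [Nat.choose_zero_right, pow_zero, Nat.sub_zero, Nat.cast_one]
  ring

private lemma Gq_mono_f {f g : ℕ → ℝ} (h : ∀ k, f k ≤ g k) {r : ℝ} (hr0 : 0 ≤ r)
    (hr1 : r ≤ 1) (n : ℕ) : Gq f n r ≤ Gq g n r := by
  apply Finset.sum_le_sum
  intro d _
  have h1 : (0:ℝ) ≤ 1 - r := by linarith
  have hnn : 0 ≤ (n.choose d : ℝ) * r^d * (1-r)^(n-d) :=
    mul_nonneg (mul_nonneg (Nat.cast_nonneg _) (pow_nonneg hr0 _)) (pow_nonneg h1 _)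
  exact mul_le_mul_of_nonneg_left (h _) hnn

private lemma Gq_succ_ge {f : ℕ → ℝ} (hf : Monotone f) {r : ℝ} (hr0 : 0 ≤ r)
    (hr1 : r ≤ 1) (n : ℕ) : Gq f n r ≤ Gq f (n+1) r := by
  rw [Gq_rec]
  have h1 : (0:ℝ) ≤ 1 - r := by linarith
  have h2 : Gq f n r ≤ Gq (fun k => f (k+1)) n r :=
    Gq_mono_f (fun k => hf (Nat.le_succ k)) hr0 hr1 n
  nlinarith [mul_le_mul_of_nonneg_left h2 h1]

private lemma Gq_anti_r : ∀ (n : ℕ) (f : ℕ → ℝ), Monotone f → ∀ {r r' : ℝ},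
    0 ≤ r → r ≤ r' → r' ≤ 1 → Gq f n r' ≤ Gq f n r := by
  intro n
  induction n with
  | zero => intro f hf r r' h0 h1 h2; rw [Gq_zero, Gq_zero]
  | succ n ih =>
    intro f hf r r' h0 h1 h2
    rw [Gq_rec, Gq_rec]
    have hf' : Monotone (fun k => f (k+1)) := fun a b hab => hf (by omega)
    have hA : Gq (fun k => f (k+1)) n r' ≤ Gq (fun k => f (k+1)) n r := ih _ hf' h0 h1 h2
    have hB : Gq f n r' ≤ Gq f n r := ih _ hf h0 h1 h2
    have hBA : Gq f n r' ≤ Gq (fun k => f (k+1)) n r' :=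
      Gq_mono_f (fun k => hf (Nat.le_succ k)) (by linarith) h2 n
    nlinarith [mul_le_mul_of_nonneg_left hA (by linarith : (0:ℝ) ≤ 1 - r),
      mul_le_mul_of_nonneg_left hB h0,
      mul_le_mul_of_nonneg_left hBA (by linarith : (0:ℝ) ≤ r' - r)]

private lemma Gq_key {f : ℕ → ℝ} (hf : Monotone f) {q : ℝ} (hq0 : 0 < q) (hq1 : q ≤ 1)
    (x : ℕ) : Gq f x (q / (x:ℝ)) ≤ Gq f (x+1) (q / ((x:ℝ)+1)) := by
  rcases Nat.eq_zero_or_pos x with hx | hx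
  · subst hx
    rw [Gq_zero]
    have : Gq f 0 (q / ((0:ℝ)+1)) ≤ Gq f 1 (q / ((0:ℝ)+1)) := by
      apply Gq_succ_ge hf
      · positivity
      · rw [div_le_one (by norm_num)]; linarith
    rw [Gq_zero] at this
    simpa using this
  · have hxR : (1:ℝ) ≤ (x:ℝ) := by exact_mod_cast hx
    have h0 : (0:ℝ) < (x:ℝ) := by linarith
    have hr0 : 0 ≤ q / ((x:ℝ)+1) := by positivity
    have hrr : q / ((x:ℝ)+1) ≤ q / (x:ℝ) :=
      div_le_div_of_nonneg_left hq0.le h0 (by linarith)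
    have hr1 : q / (x:ℝ) ≤ 1 := by
      rw [div_le_one h0]; linarith
    calc Gq f x (q / (x:ℝ)) ≤ Gq f (x+1) (q / (x:ℝ)) :=
          Gq_succ_ge hf (le_trans hr0 hrr) hr1 x
      _ ≤ Gq f (x+1) (q / ((x:ℝ)+1)) := Gq_anti_r (x+1) f hf hr0 hrr hr1


open Finset in
/-- Finite-horizon monotonicity of the discounted value function (Lemma 4.1):
the value functions `V t` of the controlled processor-sharing queue, defined by the
finite-horizon dynamic programming recursion, are nondecreasing on `ℕ` for every
horizon `t`. Here `π_x(d) = (x choose d)(q/x)^d(1-q/x)^{x-d}` (with `π_0(0) = 1`, which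
the formula yields by the conventions `q/0 = 0` and `0^0 = 1`). -/
theorem finite_horizon_value_monotone (C lam α p q : ℝ) (hC : 0 < C) (hα0 : 0 < α)
    (hα1 : α < 1) (hp0 : 0 < p) (hp1 : p < 1) (hq0 : 0 < q) (hq1 : q ≤ 1)
    (V : ℕ → ℕ → ℝ) (hV0 : ∀ x : ℕ, V 0 x = C * x)
    (hVrec : ∀ t x : ℕ, V (t + 1) x = C * x +
      min
        (α * ∑ d ∈ Finset.range (x + 1),
          (x.choose d : ℝ) * (q / x) ^ d * (1 - q / x) ^ (x - d) *
            (p * V t (x + 1 - d) + (1 - p) * V t (x - d)))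
        (lam + α * ∑ d ∈ Finset.range (x + 1),
          (x.choose d : ℝ) * (q / x) ^ d * (1 - q / x) ^ (x - d) * V t (x - d))) :
    ∀ t : ℕ, Monotone (V t) := by
  intro t
  induction t with
  | zero =>
    intro a b hab
    rw [hV0, hV0]
    exact mul_le_mul_of_nonneg_left (by exact_mod_cast hab) hC.le
  | succ t ih =>
    apply monotone_nat_of_le_succ
    intro x
    rw [hVrec t x, hVrec t (x+1)]
    have hsumA : ∀ y : ℕ, (∑ d ∈ Finset.range (y + 1),
        (y.choose d : ℝ) * (q / y) ^ d * (1 - q / y) ^ (y - d) *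
          (p * V t (y + 1 - d) + (1 - p) * V t (y - d)))
        = Gq (fun k => p * V t (k+1) + (1-p) * V t k) y (q / (y:ℝ)) := by
      intro y
      apply Finset.sum_congr rfl
      intro d hd
      have hdy : d ≤ y := Nat.lt_succ_iff.mp (Finset.mem_range.mp hd)
      have h : y + 1 - d = (y - d) + 1 := by omega
      rw [h]
    have hsumP : ∀ y : ℕ, (∑ d ∈ Finset.range (y + 1),
        (y.choose d : ℝ) * (q / y) ^ d * (1 - q / y) ^ (y - d) * V t (y - d))
        = Gq (V t) y (q / (y:ℝ)) := fun y => rfl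
    rw [hsumA x, hsumA (x+1), hsumP x, hsumP (x+1)]
    have hcast : ((x+1:ℕ):ℝ) = (x:ℝ)+1 := by push_cast; ring
    rw [hcast]
    have hfA : Monotone (fun k => p * V t (k+1) + (1-p) * V t k) := by
      intro a b hab
      exact add_le_add (mul_le_mul_of_nonneg_left (ih (by omega)) hp0.le)
        (mul_le_mul_of_nonneg_left (ih hab) (by linarith))
    apply add_le_add
    · exact mul_le_mul_of_nonneg_left (by exact_mod_cast Nat.le_succ x) hC.le
    · apply min_le_min
      · exact mul_le_mul_of_nonneg_left (Gq_key hfA hq0 hq1 x) hα0.le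
      · exact add_le_add_right
          (mul_le_mul_of_nonneg_left (Gq_key ih hq0 hq1 x) hα0.le) lam
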